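/- arXiv:1705.06555 — 2 statements merged into one kernel-verified Lean document; each statement's English description precedes it below -/
import Mathlib

section
/- Let T be a Cuntz semigroup and S'₀ ⊆ T a countable submonoid consisting of compact elements of T. Let S' be the set of suprema in T of increasing sequences from S'₀. Then S' is closed under suprema of increasing sequences: if (x_n) is an increasing sequence in S', then sup_n x_n (computed in T) belongs to S'. -/
/-- `x` is compactly contained in `y`: whenever an increasing sequence has a supremum
dominating `y`, some term dominates `x`. -/
def CC {M : Type*} [Preorder M] (x y : M) : Prop :=
  ∀ f : ℕ → M, Monotone f → ∀ s : M, IsLUB (Set.range f) s → y ≤ s → ∃ n, x ≤ f n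

/-- An element is compact if it is compactly contained in itself. -/
def IsCpt {M : Type*} [Preorder M] (x : M) : Prop := CC x x

/-- A Cuntz semigroup: a positively ordered monoid with suprema of increasing sequences,
rapidly increasing approximations, and additivity of suprema and of `CC`. -/
class CuSemigroup (S : Type*) extends AddCommMonoid S, PartialOrder S, IsOrderedAddMonoid S where
  zero_le' : ∀ x : S, 0 ≤ x
  seqSup : ∀ f : ℕ → S, Monotone f → ∃ s : S, IsLUB (Set.range f) s
  rapid : ∀ x : S, ∃ f : ℕ → S, Monotone f ∧ (∀ n, CC (f n) (f (n + 1))) ∧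
    IsLUB (Set.range f) x
  supAdd : ∀ f g : ℕ → S, Monotone f → Monotone g → ∀ a b : S, IsLUB (Set.range f) a →
    IsLUB (Set.range g) b → IsLUB (Set.range fun n => f n + g n) (a + b)
  ccAdd : ∀ x x' y y' : S, CC x x' → CC y y' → CC (x + y) (x' + y')

/-- The set of suprema of increasing sequences from a countable submonoid of compact
elements is closed under suprema of increasing sequences. -/
theorem stmt5 {T : Type*} [CuSemigroup T] (S₀ : AddSubmonoid T)
    (hS₀cpt : ∀ a ∈ S₀, IsCpt a) (hS₀ctble : (S₀ : Set T).Countable)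
    (S' : Set T)
    (hS' : S' = {z : T | ∃ h : ℕ → T, Monotone h ∧ (∀ n, h n ∈ S₀) ∧ IsLUB (Set.range h) z})
    (f : ℕ → T) (hf : Monotone f) (hfS : ∀ n, f n ∈ S')
    (x : T) (hx : IsLUB (Set.range f) x) :
    x ∈ S' := by
  subst hS'
  choose h hmono hmem hlub using hfS
  -- the step: given a ∈ S₀ with a ≤ x and indices n k, find b ∈ S₀ with
  -- b ≤ x, a ≤ b and h n k ≤ b
  have step : ∀ a : T, a ∈ S₀ → a ≤ x → ∀ n k : ℕ,
      ∃ b : T, b ∈ S₀ ∧ b ≤ x ∧ a ≤ b ∧ h n k ≤ b := by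
    intro a ha hax n k
    obtain ⟨N₁, hN₁⟩ := hS₀cpt a ha f hf x hx hax
    have hhk : h n k ≤ x := le_trans ((hlub n).1 ⟨k, rfl⟩) (hx.1 ⟨n, rfl⟩)
    obtain ⟨N₂, hN₂⟩ := hS₀cpt _ (hmem n k) f hf x hx hhk
    have ha' : a ≤ f (max N₁ N₂) := hN₁.trans (hf (le_max_left _ _))
    have hh' : h n k ≤ f (max N₁ N₂) := hN₂.trans (hf (le_max_right _ _))
    obtain ⟨k₁, hk₁⟩ := hS₀cpt a ha (h _) (hmono _) (f _) (hlub _) ha'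
    obtain ⟨k₂, hk₂⟩ := hS₀cpt _ (hmem n k) (h _) (hmono _) (f _) (hlub _) hh'
    refine ⟨h (max N₁ N₂) (max k₁ k₂), hmem _ _,
      le_trans ((hlub _).1 ⟨_, rfl⟩) (hx.1 ⟨_, rfl⟩),
      hk₁.trans (hmono _ (le_max_left _ _)), hk₂.trans (hmono _ (le_max_right _ _))⟩
  choose stepF hF1 hF2 hF3 hF4 using step
  -- build the diagonal sequence
  let g : ℕ → {a : T // a ∈ S₀ ∧ a ≤ x} := fun m => Nat.rec
    ⟨0, S₀.zero_mem, CuSemigroup.zero_le' x⟩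
    (fun m p => ⟨stepF p.1 p.2.1 p.2.2 (Nat.unpair m).1 (Nat.unpair m).2,
      hF1 p.1 p.2.1 p.2.2 _ _, hF2 p.1 p.2.1 p.2.2 _ _⟩) m
  have hgstep : ∀ m, (g m).1 ≤ (g (m + 1)).1 := fun m =>
    hF3 (g m).1 (g m).2.1 (g m).2.2 _ _
  have hgdom : ∀ n k, h n k ≤ (g (Nat.pair n k + 1)).1 := by
    intro n k
    have := hF4 (g (Nat.pair n k)).1 (g _).2.1 (g _).2.2
      (Nat.unpair (Nat.pair n k)).1 (Nat.unpair (Nat.pair n k)).2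
    show h n k ≤ stepF (g (Nat.pair n k)).1 (g _).2.1 (g _).2.2
      (Nat.unpair (Nat.pair n k)).1 (Nat.unpair (Nat.pair n k)).2
    simpa [Nat.unpair_pair] using this
  have hgmono : Monotone fun m => (g m).1 := monotone_nat_of_le_succ hgstep
  refine ⟨fun m => (g m).1, hgmono, fun m => (g m).2.1, ?_, ?_⟩
  · rintro _ ⟨m, rfl⟩
    exact (g m).2.2
  · intro b hb
    refine hx.2 ?_
    rintro _ ⟨n, rfl⟩
    refine (hlub n).2 ?_
    rintro _ ⟨k, rfl⟩
    exact (hgdom n k).trans (hb ⟨Nat.pair n k + 1, rfl⟩)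
end

section
/- Let T be a Cuntz semigroup, S'₀ ⊆ T a submonoid of compact elements, and S' ⊆ T the set of suprema of increasing sequences from S'₀, with the order inherited from T. Then for x, y ∈ S', compact containment x ≪ y computed in S' holds if and only if x ≪ y computed in T holds. -/
/-- Compact containment relative to a subset `P`: only increasing sequences in `P` whose
supremum lies in `P` are tested. -/
def CCrel {M : Type*} [Preorder M] (P : Set M) (x y : M) : Prop :=
  ∀ f : ℕ → M, Monotone f → (∀ n, f n ∈ P) → ∀ s : M, s ∈ P → IsLUB (Set.range f) s →
    y ≤ s → ∃ n, x ≤ f n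

/-- For elements of the set `S'` of suprema of increasing sequences from a submonoid of
compact elements, compact containment computed in `S'` agrees with compact containment
computed in `T`. -/
theorem stmt6 {T : Type*} [CuSemigroup T] (S₀ : AddSubmonoid T)
    (hS₀ : ∀ a ∈ S₀, IsCpt a)
    (S' : Set T)
    (hS' : S' = {z : T | ∃ h : ℕ → T, Monotone h ∧ (∀ n, h n ∈ S₀) ∧ IsLUB (Set.range h) z})
    (x y : T) (hx : x ∈ S') (hy : y ∈ S') :
    CCrel S' x y ↔ CC x y := by
  constructor
  · intro hrel f hf s hs hys
    -- write y as a supremum of compact elements from S₀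
    obtain ⟨h, hmono, hmem, hlub⟩ := hS' ▸ hy
    -- each h n lies in S' (as sup of the constant sequence)
    have hmemS' : ∀ n, h n ∈ S' := by
      intro n
      rw [hS']
      exact ⟨fun _ => h n, monotone_const, fun _ => hmem n,
        by simpa [Set.range_const] using isLUB_singleton (a := h n)⟩
    -- apply CCrel to the sequence h with supremum y
    obtain ⟨n, hxn⟩ := hrel h hmono hmemS' y hy hlub le_rfl
    -- h n is compact and h n ≤ y ≤ s
    have hcpt : IsCpt (h n) := hS₀ (h n) (hmem n)
    have hns : h n ≤ s := le_trans (hlub.1 ⟨n, rfl⟩) hys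
    obtain ⟨m, hm⟩ := hcpt f hf s hs hns
    exact ⟨m, le_trans hxn hm⟩
  · intro hcc f hf _ s _ hs hys
    exact hcc f hf s hs hys
end
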